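/- Let k be a positive integer, let c₁, …, c_k, d₁, …, d_k be positive integers with c_j and d_j relatively prime for each 1 ≤ j ≤ k, and set M = 2·max{c₁, …, c_k, d₁, …, d_k}. Then for every real x ≥ 1, ∑_{m ≤ x} ∑_{j=1}^{k} ∑_{p ∣ (c_jm+d_j)} log(1 − 1/p)^{-1} ≤ (k log 2)·x + (k log 4)·log(xM), where the outer sum is over positive integers m ≤ x and the inner sum is over the primes p dividing c_jm + d_j. -/

import Mathlib

lemma telescope (g : ℕ → ℝ) (a : ℕ) : ∀ N, a ≤ N →
    ∑ i ∈ Finset.Icc (a+1) N, (g i - g (i-1)) = g N - g a := by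
  intro N
  induction N with
  | zero => intro h; interval_cases a; simp
  | succ N ih =>
    intro h
    rcases Nat.lt_or_ge a (N+1) with h1 | h1
    · have ha : a ≤ N := Nat.lt_succ_iff.mp h1
      rw [Finset.sum_Icc_succ_top (by omega), ih ha]
      simp
    · have : a = N + 1 := le_antisymm h h1
      subst this
      simp

lemma L_eq (p : ℕ) (hp : 2 ≤ p) :
    Real.log (1 - 1/(p:ℝ))⁻¹ = Real.log p - Real.log ((p-1 : ℕ)) := by
  have h0 : (0:ℝ) < p := by positivity
  have h2 : (2:ℝ) ≤ p := by exact_mod_cast hp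
  have hc : ((p-1 : ℕ) : ℝ) = (p:ℝ) - 1 := by
    push_cast [Nat.cast_sub (by omega : 1 ≤ p)]; ring
  rw [hc]
  have : (1 - 1/(p:ℝ))⁻¹ = (p:ℝ) / ((p:ℝ) - 1) := by
    field_simp
  rw [this, Real.log_div (by linarith) (by linarith)]

lemma L_nonneg (p : ℕ) (hp : 2 ≤ p) : 0 ≤ Real.log (1 - 1/(p:ℝ))⁻¹ := by
  have h2 : (2:ℝ) ≤ p := by exact_mod_cast hp
  apply Real.log_nonneg
  rw [one_le_inv_iff₀]
  constructor
  · rw [sub_pos, div_lt_one (by linarith)]; linarith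
  · have : 0 < 1/(p:ℝ) := by positivity
    linarith

lemma L_le (p : ℕ) (hp : 2 ≤ p) :
    Real.log (1 - 1/(p:ℝ))⁻¹ ≤ 1 / ((p:ℝ) - 1) := by
  have h2 : (2:ℝ) ≤ p := by exact_mod_cast hp
  have he : (1 - 1/(p:ℝ))⁻¹ = (p:ℝ) / ((p:ℝ) - 1) := by field_simp
  rw [he]
  have h := Real.log_le_sub_one_of_pos (x := (p:ℝ) / ((p:ℝ) - 1))
    (by apply div_pos <;> linarith)
  have : (p:ℝ) / ((p:ℝ) - 1) - 1 = 1 / ((p:ℝ) - 1) := by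
    rw [div_sub_one (by intro h'; linarith)]; norm_num
  linarith

lemma count_le (c d p n : ℕ) (hp : p.Prime) (hcd : Nat.Coprime c d) :
    ((Finset.Icc 1 n).filter (fun m => p ∣ c*m + d)).card ≤ n / p + 1 := by
  classical
  have := Finset.card_le_card_of_injOn (s := (Finset.Icc 1 n).filter (fun m => p ∣ c*m + d))
    (t := Finset.range (n/p + 1)) (fun m => (m-1)/p) ?_ ?_
  · simpa using this
  · intro m hm
    simp only [Finset.mem_coe, Finset.mem_filter, Finset.mem_Icc] at hm
    simp only [Finset.mem_coe, Finset.mem_range]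
    have : (m-1)/p ≤ n/p := Nat.div_le_div_right (by omega)
    omega
  · intro m₁ hm₁ m₂ hm₂ hf
    simp only [Finset.coe_filter, Set.mem_setOf_eq, Finset.mem_Icc] at hm₁ hm₂
    simp only at hf
    have key : ∀ a b : ℕ, 1 ≤ a → a ≤ b → p ∣ c*a+d → p ∣ c*b+d → (a-1)/p = (b-1)/p → b ≤ a := by
      intro a b ha hab hda hdb hq
      have hdiff : p ∣ c*(b-a) := by
        have heq : c*b+d - (c*a+d) = c*(b-a) := by
          rw [Nat.mul_sub]; omega
        rw [← heq]
        exact Nat.dvd_sub hdb hda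
      have hpc : ¬ p ∣ c := by
        intro hpc
        have hpd : p ∣ d := (Nat.dvd_add_right (Dvd.dvd.mul_right hpc a)).mp hda
        have h1 : p ∣ Nat.gcd c d := Nat.dvd_gcd hpc hpd
        rw [hcd] at h1
        exact hp.one_lt.ne' (Nat.dvd_one.mp h1)
      have hpba : p ∣ (b - a) := ((Nat.Prime.dvd_mul hp).mp hdiff).resolve_left hpc
      have hp0 : 0 < p := hp.pos
      have e1 := Nat.div_add_mod (a-1) p
      have e2 := Nat.div_add_mod (b-1) p
      have r1 := Nat.mod_lt (a-1) hp0
      have r2 := Nat.mod_lt (b-1) hp0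
      rw [hq] at e1
      generalize hK : p * ((b-1)/p) = K at e1 e2
      have hba : b - a < p := by omega
      rcases Nat.eq_zero_or_pos (b-a) with h0 | h0
      · omega
      · have := Nat.le_of_dvd h0 hpba; omega
    rcases le_total m₁ m₂ with h | h
    · exact le_antisymm h (key m₁ m₂ hm₁.1.1 h hm₁.2 hm₂.2 hf)
    · exact le_antisymm (key m₂ m₁ hm₂.1.1 h hm₂.2 hm₁.2 hf.symm) h

-- sum of L p over primes in Icc 2 N is ≤ log N
lemma sumB (N : ℕ) (hN : 1 ≤ N) :
    ∑ p ∈ (Finset.Icc 2 N).filter Nat.Prime, Real.log (1 - 1/(p:ℝ))⁻¹ ≤ Real.log N := by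
  classical
  have h1 : ∑ p ∈ (Finset.Icc 2 N).filter Nat.Prime, Real.log (1 - 1/(p:ℝ))⁻¹
      = ∑ p ∈ (Finset.Icc 2 N).filter Nat.Prime, (Real.log p - Real.log ((p-1:ℕ))) := by
    apply Finset.sum_congr rfl
    intro p hp
    simp only [Finset.mem_filter, Finset.mem_Icc] at hp
    exact L_eq p hp.1.1
  rw [h1]
  have h2 : ∑ p ∈ (Finset.Icc 2 N).filter Nat.Prime, (Real.log p - Real.log ((p-1:ℕ)))
      ≤ ∑ i ∈ Finset.Icc 2 N, (Real.log i - Real.log ((i-1:ℕ))) := by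
    apply Finset.sum_le_sum_of_subset_of_nonneg (Finset.filter_subset _ _)
    intro i hi _
    simp only [Finset.mem_Icc] at hi
    have h0 : (1:ℝ) ≤ ((i-1:ℕ):ℝ) := by exact_mod_cast (by omega : 1 ≤ i - 1)
    have hle : ((i-1:ℕ):ℝ) ≤ (i:ℝ) := by exact_mod_cast (by omega : i - 1 ≤ i)
    have := Real.log_le_log (by linarith) hle
    linarith
  have h3 := telescope (fun i => Real.log i) 1 N hN
  calc _ ≤ _ := h2
    _ = Real.log N := by rw [show (2:ℕ) = 1 + 1 from rfl, h3]; simp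

-- tail sum
lemma tail_le (N : ℕ) :
    ∑ i ∈ Finset.Icc 11 N, (1/((i-1:ℕ):ℝ) - 1/(i:ℝ)) ≤ 1/10 := by
  rcases le_or_gt 11 N with h | h
  · have h3 := telescope (fun i => -(1/(i:ℝ))) 10 N (by omega)
    have : ∑ i ∈ Finset.Icc 11 N, (1/((i-1:ℕ):ℝ) - 1/(i:ℝ))
        = ∑ i ∈ Finset.Icc 11 N, (-(1/(i:ℝ)) - -(1/((i-1:ℕ):ℝ))) := by
      apply Finset.sum_congr rfl; intro i hi; ring
    rw [this, show (11:ℕ) = 10 + 1 from rfl, h3]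
    have h0 : 0 ≤ 1/(N:ℝ) := by positivity
    push_cast
    linarith
  · rw [Finset.Icc_eq_empty (by omega)]
    norm_num

lemma sumC (N : ℕ) :
    ∑ p ∈ (Finset.Icc 2 N).filter Nat.Prime, Real.log (1 - 1/(p:ℝ))⁻¹ / p ≤ Real.log 2 := by
  classical
  set Pf := (Finset.Icc 2 N).filter Nat.Prime with hPf
  have hnn : ∀ p ∈ Pf, 0 ≤ Real.log (1 - 1/(p:ℝ))⁻¹ / p := by
    intro p hp
    simp only [hPf, Finset.mem_filter, Finset.mem_Icc] at hp
    have := L_nonneg p hp.1.1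
    positivity
  rw [← Finset.sum_filter_add_sum_filter_not Pf (fun p => p < 11)]
  have hA : ∑ p ∈ Pf.filter (fun p => p < 11), Real.log (1 - 1/(p:ℝ))⁻¹ / p
      ≤ Real.log 2 / 2 + 1/6 + 1/20 + 1/42 := by
    have hsub : Pf.filter (fun p => p < 11) ⊆ ({2,3,5,7} : Finset ℕ) := by
      intro p hp
      simp only [hPf, Finset.mem_filter, Finset.mem_Icc] at hp
      obtain ⟨⟨⟨h2, _⟩, hprime⟩, h11⟩ := hp
      interval_cases p <;> first | (decide) | (norm_num at hprime)
    calc ∑ p ∈ Pf.filter (fun p => p < 11), Real.log (1 - 1/(p:ℝ))⁻¹ / p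
        ≤ ∑ p ∈ ({2,3,5,7} : Finset ℕ), Real.log (1 - 1/(p:ℝ))⁻¹ / p := by
          apply Finset.sum_le_sum_of_subset_of_nonneg hsub
          intro p hp _
          fin_cases hp <;>
            · norm_num
              first
                | (have := L_nonneg 3 (by norm_num); norm_num at this ⊢; positivity)
                | positivity
      _ ≤ Real.log 2 / 2 + 1/6 + 1/20 + 1/42 := by
          rw [show ({2,3,5,7} : Finset ℕ) = insert 2 (insert 3 (insert 5 ({7} : Finset ℕ))) from rfl]
          rw [Finset.sum_insert (by decide), Finset.sum_insert (by decide),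
              Finset.sum_insert (by decide), Finset.sum_singleton]
          have l3 := L_le 3 (by norm_num)
          have l5 := L_le 5 (by norm_num)
          have l7 := L_le 7 (by norm_num)
          norm_num at l3 l5 l7 ⊢
          linarith
  have hB : ∑ p ∈ Pf.filter (fun p => ¬ p < 11), Real.log (1 - 1/(p:ℝ))⁻¹ / p ≤ 1/10 := by
    calc ∑ p ∈ Pf.filter (fun p => ¬ p < 11), Real.log (1 - 1/(p:ℝ))⁻¹ / p
        ≤ ∑ p ∈ Pf.filter (fun p => ¬ p < 11), (1/((p-1:ℕ):ℝ) - 1/(p:ℝ)) := by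
          apply Finset.sum_le_sum
          intro p hp
          simp only [hPf, Finset.mem_filter, Finset.mem_Icc, not_lt] at hp
          obtain ⟨⟨⟨h2, hN⟩, hprime⟩, h11⟩ := hp
          have hp2 : (2:ℝ) ≤ (p:ℝ) := by exact_mod_cast h2
          have hL := L_le p h2
          have hc : ((p-1:ℕ):ℝ) = (p:ℝ) - 1 := by
            push_cast [Nat.cast_sub (by omega : 1 ≤ p)]; ring
          rw [hc]
          have hne1 : (p:ℝ) - 1 ≠ 0 := ne_of_gt (by linarith)
          have hne2 : (p:ℝ) ≠ 0 := ne_of_gt (by linarith)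
          have hid : 1/((p:ℝ)-1) - 1/(p:ℝ) = (1/((p:ℝ)-1))/(p:ℝ) := by
            rw [div_div, div_sub_div _ _ hne1 hne2]
            ring_nf
          rw [hid]
          apply div_le_div_of_nonneg_right hL (by linarith) |>.trans_eq rfl
      _ ≤ ∑ i ∈ Finset.Icc 11 N, (1/((i-1:ℕ):ℝ) - 1/(i:ℝ)) := by
          apply Finset.sum_le_sum_of_subset_of_nonneg
          · intro p hp
            simp only [hPf, Finset.mem_filter, Finset.mem_Icc, not_lt] at hp
            simp only [Finset.mem_Icc]
            exact ⟨hp.2, hp.1.1.2⟩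
          · intro i hi _
            simp only [Finset.mem_Icc] at hi
            have h1 : (1:ℝ) ≤ ((i-1:ℕ):ℝ) := by exact_mod_cast (by omega : 1 ≤ i - 1)
            have h2 : ((i-1:ℕ):ℝ) ≤ (i:ℝ) := by exact_mod_cast (by omega : i - 1 ≤ i)
            have := one_div_le_one_div_of_le (by linarith) h2
            linarith
      _ ≤ 1/10 := tail_le N
  have hlog2 := Real.log_two_gt_d9
  linarith

lemma perj (c d n : ℕ) (hc : 0 < c) (hd : 0 < d) (hcd : Nat.Coprime c d) (x : ℝ)
    (hn : (n:ℝ) ≤ x) :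
    ∑ m ∈ Finset.Icc 1 n, ∑ p ∈ (c * m + d).primeFactors, Real.log (1 - 1 / (p:ℝ))⁻¹
      ≤ Real.log 2 * x + Real.log ((c * n + d : ℕ)) := by
  classical
  set N := c * n + d with hN
  set Pf := (Finset.Icc 2 N).filter Nat.Prime with hPf
  have hx0 : (0:ℝ) ≤ x := le_trans (by positivity) hn
  have hfac : ∀ m ∈ Finset.Icc 1 n, (c * m + d).primeFactors = Pf.filter (· ∣ c*m+d) := by
    intro m hm
    simp only [Finset.mem_Icc] at hm
    ext p
    simp only [Nat.mem_primeFactors, hPf, Finset.mem_filter, Finset.mem_Icc]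
    constructor
    · rintro ⟨hp, hdvd, -⟩
      refine ⟨⟨⟨hp.two_le, ?_⟩, hp⟩, hdvd⟩
      have h1 : p ≤ c * m + d := Nat.le_of_dvd (by positivity) hdvd
      have h2 : c * m ≤ c * n := Nat.mul_le_mul_left c hm.2
      omega
    · rintro ⟨⟨-, hp⟩, hdvd⟩
      exact ⟨hp, hdvd, by positivity⟩
  calc ∑ m ∈ Finset.Icc 1 n, ∑ p ∈ (c * m + d).primeFactors, Real.log (1 - 1/(p:ℝ))⁻¹
      = ∑ m ∈ Finset.Icc 1 n, ∑ p ∈ Pf, if p ∣ c*m+d then Real.log (1 - 1/(p:ℝ))⁻¹ else 0 := by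
        apply Finset.sum_congr rfl
        intro m hm
        rw [hfac m hm, Finset.sum_filter]
    _ = ∑ p ∈ Pf, ∑ m ∈ Finset.Icc 1 n, if p ∣ c*m+d then Real.log (1 - 1/(p:ℝ))⁻¹ else 0 :=
        Finset.sum_comm
    _ = ∑ p ∈ Pf, (((Finset.Icc 1 n).filter (fun m => p ∣ c*m+d)).card : ℝ)
          * Real.log (1 - 1/(p:ℝ))⁻¹ := by
        apply Finset.sum_congr rfl
        intro p _
        rw [← Finset.sum_filter, Finset.sum_const, nsmul_eq_mul]
    _ ≤ ∑ p ∈ Pf, (x/(p:ℝ) + 1) * Real.log (1 - 1/(p:ℝ))⁻¹ := by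
        apply Finset.sum_le_sum
        intro p hp
        simp only [hPf, Finset.mem_filter, Finset.mem_Icc] at hp
        apply mul_le_mul_of_nonneg_right _ (L_nonneg p hp.1.1)
        have h1 := count_le c d p n hp.2 hcd
        have h2 : (((Finset.Icc 1 n).filter (fun m => p ∣ c*m+d)).card : ℝ)
            ≤ ((n/p + 1 : ℕ) : ℝ) := by exact_mod_cast h1
        have h3 : ((n/p : ℕ) : ℝ) ≤ (n:ℝ)/(p:ℝ) := Nat.cast_div_le
        have hp0 : (0:ℝ) < p := by
          have := hp.1.1; positivity
        have h4 : (n:ℝ)/(p:ℝ) ≤ x/(p:ℝ) := by gcongr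
        push_cast at h2
        linarith
    _ = x * (∑ p ∈ Pf, Real.log (1 - 1/(p:ℝ))⁻¹ / p) + ∑ p ∈ Pf, Real.log (1 - 1/(p:ℝ))⁻¹ := by
        rw [Finset.mul_sum, ← Finset.sum_add_distrib]
        apply Finset.sum_congr rfl
        intro p _
        ring
    _ ≤ x * Real.log 2 + Real.log N := by
        apply add_le_add
        · exact mul_le_mul_of_nonneg_left (sumC N) hx0
        · exact sumB N (by omega)
    _ = Real.log 2 * x + Real.log N := by ring

theorem log_totient_ratio_sum_upper_bound
    (k : ℕ) (hk : 0 < k) (c d : ℕ → ℕ)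
    (hc : ∀ j, j < k → 0 < c j) (hd : ∀ j, j < k → 0 < d j)
    (hcd : ∀ j, j < k → Nat.Coprime (c j) (d j))
    (M : ℕ) (hM : M = 2 * (Finset.range k).sup (fun j => max (c j) (d j)))
    (x : ℝ) (hx : 1 ≤ x) :
    ∑ m ∈ Finset.Icc 1 ⌊x⌋₊, ∑ j ∈ Finset.range k,
        ∑ p ∈ (c j * m + d j).primeFactors, Real.log (1 - 1 / (p : ℝ))⁻¹ ≤
      (k : ℝ) * Real.log 2 * x + (k : ℝ) * Real.log 4 * Real.log (x * M) := by
  have hx0 : (0:ℝ) ≤ x := by linarith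
  have hnx : ((⌊x⌋₊ : ℕ) : ℝ) ≤ x := Nat.floor_le hx0
  -- M ≥ 2
  have hM2 : 2 ≤ M := by
    have h0 : 0 ∈ Finset.range k := Finset.mem_range.mpr hk
    have h1 := Finset.le_sup (f := fun j => max (c j) (d j)) h0
    have h2 : c 0 ≤ max (c 0) (d 0) := le_max_left _ _
    have hc0 := hc 0 hk
    omega
  have hxM1 : (1:ℝ) ≤ x * M := by
    have : (2:ℝ) ≤ (M:ℝ) := by exact_mod_cast hM2
    nlinarith
  have hlog4 : (1:ℝ) ≤ Real.log 4 := by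
    rw [show (1:ℝ) = Real.log (Real.exp 1) by rw [Real.log_exp]]
    apply Real.log_le_log (Real.exp_pos 1)
    have := Real.exp_one_lt_d9
    linarith
  have hlogxM : (0:ℝ) ≤ Real.log (x * M) := Real.log_nonneg hxM1
  rw [Finset.sum_comm]
  calc ∑ j ∈ Finset.range k, ∑ m ∈ Finset.Icc 1 ⌊x⌋₊,
        ∑ p ∈ (c j * m + d j).primeFactors, Real.log (1 - 1 / (p : ℝ))⁻¹
      ≤ ∑ j ∈ Finset.range k, (Real.log 2 * x + Real.log 4 * Real.log (x * M)) := by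
        apply Finset.sum_le_sum
        intro j hj
        have hj' := Finset.mem_range.mp hj
        have h1 := perj (c j) (d j) ⌊x⌋₊ (hc j hj') (hd j hj') (hcd j hj') x hnx
        refine h1.trans ?_
        have hsup := Finset.le_sup (f := fun j => max (c j) (d j)) hj
        have hmx1 : c j ≤ max (c j) (d j) := le_max_left _ _
        have hmx2 : d j ≤ max (c j) (d j) := le_max_right _ _
        have hcM : 2 * (c j) ≤ M := by omega
        have hdM : 2 * (d j) ≤ M := by omega
        have hle : ((c j * ⌊x⌋₊ + d j : ℕ) : ℝ) ≤ x * M := by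
          push_cast
          have h2 : (2:ℝ) * (c j) ≤ M := by exact_mod_cast hcM
          have h3 : (2:ℝ) * (d j) ≤ M := by exact_mod_cast hdM
          have hM0 : (0:ℝ) ≤ (M:ℝ) := by positivity
          have hc0 : (0:ℝ) ≤ (c j : ℝ) := by positivity
          have hn0 : (0:ℝ) ≤ ((⌊x⌋₊:ℕ):ℝ) := by positivity
          nlinarith
        have hpos : (0:ℝ) < ((c j * ⌊x⌋₊ + d j : ℕ) : ℝ) := by
          have := hd j hj'
          positivity
        have hlog : Real.log ((c j * ⌊x⌋₊ + d j : ℕ)) ≤ Real.log (x * M) :=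
          Real.log_le_log hpos hle
        nlinarith
    _ = (k : ℝ) * Real.log 2 * x + (k : ℝ) * Real.log 4 * Real.log (x * M) := by
        rw [Finset.sum_const, Finset.card_range, nsmul_eq_mul]
        ring
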